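/- Utility-invariant threshold identity (Theorem, product form): fix an event ℓ, a support family A, and any function D : ℝ → ℝ. Suppose the portfolio (c, g) is supported on A, the cash stationarity equation λ = ∑_x Pr(x)·D(W(x)) holds, and for every active outcome i ∈ A ℓ the active stationarity equation p ℓ i · E₋ℓ[D(g ℓ i + R_ℓ)] = λ · π ℓ i holds. Then λ·(1 − Q_{ℓ,A}) = (1 − P_{ℓ,A}) · K_ℓ, where K_ℓ = E₋ℓ[D ∘ R_ℓ] is the continuation factor of event ℓ. -/
import Mathlib


open Finset

/-- Probability of a product state `x`. -/
def prodProb {m : ℕ} {n : Fin m → ℕ} (p : ∀ ℓ, Fin (n ℓ) → ℝ)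
    (x : ∀ ℓ, Fin (n ℓ)) : ℝ :=
  ∏ ℓ, p ℓ (x ℓ)

/-- Terminal wealth of the portfolio `(c, g)` in product state `x`. -/
def wealth {m : ℕ} {n : Fin m → ℕ} (c : ℝ) (g : ∀ ℓ, Fin (n ℓ) → ℝ)
    (x : ∀ ℓ, Fin (n ℓ)) : ℝ :=
  c + ∑ ℓ, g ℓ (x ℓ)

/-- Probability of a reduced state `y` (a state of all events other than `ℓ`). -/
def redProb {m : ℕ} {n : Fin m → ℕ} (p : ∀ ℓ, Fin (n ℓ) → ℝ) (ℓ : Fin m)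
    (y : ∀ r : {r : Fin m // r ≠ ℓ}, Fin (n r.1)) : ℝ :=
  ∏ r, p r.1 (y r)

/-- Background wealth `R_ℓ(y)` from all events other than `ℓ`. -/
def background {m : ℕ} {n : Fin m → ℕ} (c : ℝ) (g : ∀ ℓ, Fin (n ℓ) → ℝ) (ℓ : Fin m)
    (y : ∀ r : {r : Fin m // r ≠ ℓ}, Fin (n r.1)) : ℝ :=
  c + ∑ r, g r.1 (y r)

/-- Reduced expectation `E₋ℓ[h]` over reduced states of event `ℓ`. -/
def Eminus {m : ℕ} {n : Fin m → ℕ} (p : ∀ ℓ, Fin (n ℓ) → ℝ) (ℓ : Fin m)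
    (h : (∀ r : {r : Fin m // r ≠ ℓ}, Fin (n r.1)) → ℝ) : ℝ :=
  ∑ y, redProb p ℓ y * h y

/-- Feasibility: nonnegative cash and wagers, unit budget, positive wealth in every state. -/
def Feasible {m : ℕ} {n : Fin m → ℕ} (π : ∀ ℓ, Fin (n ℓ) → ℝ)
    (c : ℝ) (g : ∀ ℓ, Fin (n ℓ) → ℝ) : Prop :=
  0 ≤ c ∧ (∀ ℓ i, 0 ≤ g ℓ i) ∧ (c + ∑ ℓ, ∑ i, π ℓ i * g ℓ i = 1) ∧
    ∀ x, 0 < wealth c g x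

/-- The wagers `g` are supported on the support family `A`. -/
def SupportedOn {m : ℕ} {n : Fin m → ℕ} (A : ∀ ℓ, Finset (Fin (n ℓ)))
    (g : ∀ ℓ, Fin (n ℓ) → ℝ) : Prop :=
  ∀ ℓ i, (i ∈ A ℓ → 0 < g ℓ i) ∧ (i ∉ A ℓ → g ℓ i = 0)

/-- `U` is an admissible utility with derivative `U'`. -/
def Admissible (U U' : ℝ → ℝ) : Prop :=
  (∀ w : ℝ, 0 < w → HasDerivAt U (U' w) w) ∧ (∀ w : ℝ, 0 < w → 0 < U' w) ∧
    StrictAntiOn U' (Set.Ioi 0)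

lemma prod_split {m : ℕ} (ℓ : Fin m) {β : Fin m → Type*} [∀ r, Fintype (β r)]
    (f : ∀ r, β r → ℝ) (i : β ℓ) (y : ∀ r : {r : Fin m // r ≠ ℓ}, β r.1) :
    ∏ r, f r ((Equiv.piSplitAt ℓ β).symm (i, y) r)
      = f ℓ i * ∏ r : {r : Fin m // r ≠ ℓ}, f r.1 (y r) := by
  rw [Fintype.prod_eq_mul_prod_compl ℓ]
  congr 1
  · simp
  · rw [Finset.prod_subtype (p := fun r => r ≠ ℓ) ({ℓ}ᶜ) (by simp) (fun r => f r ((Equiv.piSplitAt ℓ β).symm (i, y) r))]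
    apply Finset.prod_congr rfl
    intro r _
    simp [Equiv.piSplitAt, r.prop]

lemma sum_split {m : ℕ} (ℓ : Fin m) {β : Fin m → Type*} [∀ r, Fintype (β r)]
    (f : ∀ r, β r → ℝ) (i : β ℓ) (y : ∀ r : {r : Fin m // r ≠ ℓ}, β r.1) :
    ∑ r, f r ((Equiv.piSplitAt ℓ β).symm (i, y) r)
      = f ℓ i + ∑ r : {r : Fin m // r ≠ ℓ}, f r.1 (y r) := by
  rw [Fintype.sum_eq_add_sum_compl ℓ]
  congr 1
  · simp
  · rw [Finset.sum_subtype (p := fun r => r ≠ ℓ) ({ℓ}ᶜ) (by simp) (fun r => f r ((Equiv.piSplitAt ℓ β).symm (i, y) r))]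
    apply Finset.sum_congr rfl
    intro r _
    simp [Equiv.piSplitAt, r.prop]

lemma tot_split {m : ℕ} {n : Fin m → ℕ} (p : ∀ ℓ, Fin (n ℓ) → ℝ)
    (c : ℝ) (g : ∀ ℓ, Fin (n ℓ) → ℝ) (ℓ : Fin m) (D : ℝ → ℝ) :
    ∑ x, prodProb p x * D (wealth c g x)
      = ∑ i, p ℓ i * Eminus p ℓ (fun y => D (g ℓ i + background c g ℓ y)) := by
  rw [← Equiv.sum_comp (Equiv.piSplitAt ℓ (fun r => Fin (n r))).symm
    (fun x => prodProb p x * D (wealth c g x)), Fintype.sum_prod_type]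
  apply Finset.sum_congr rfl
  intro i _
  rw [Eminus, Finset.mul_sum]
  apply Finset.sum_congr rfl
  intro y _
  have h1 : prodProb p ((Equiv.piSplitAt ℓ (fun r => Fin (n r))).symm (i, y))
      = p ℓ i * redProb p ℓ y := prod_split ℓ (fun r j => p r j) i y
  have h2 : wealth c g ((Equiv.piSplitAt ℓ (fun r => Fin (n r))).symm (i, y))
      = g ℓ i + background c g ℓ y := by
    rw [wealth, background, sum_split ℓ (fun r j => g r j) i y]; ring
  rw [h1, h2]; ring

/-- utility-invariant threshold identity, product form:
`λ (1 - Q_{ℓ,A}) = (1 - P_{ℓ,A}) K_ℓ`. -/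
theorem threshold_identity_product {m : ℕ} (n : Fin m → ℕ)
    (p π : ∀ ℓ, Fin (n ℓ) → ℝ) (hm : 1 ≤ m)
    (hp : ∀ ℓ i, 0 < p ℓ i) (hpsum : ∀ ℓ, ∑ i, p ℓ i = 1)
    (hπ : ∀ ℓ i, 0 < π ℓ i)
    (A : ∀ r, Finset (Fin (n r))) (ℓ : Fin m) (D : ℝ → ℝ)
    (c : ℝ) (g : ∀ ℓ, Fin (n ℓ) → ℝ) (lam : ℝ)
    (hsupp : SupportedOn A g)
    (hcash : lam = ∑ x, prodProb p x * D (wealth c g x))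
    (hactive : ∀ i ∈ A ℓ,
      p ℓ i * Eminus p ℓ (fun y => D (g ℓ i + background c g ℓ y)) = lam * π ℓ i) :
    lam * (1 - ∑ i ∈ A ℓ, π ℓ i)
      = (1 - ∑ i ∈ A ℓ, p ℓ i) * Eminus p ℓ (fun y => D (background c g ℓ y)) := by
  rw [tot_split p c g ℓ D, ← Finset.sum_add_sum_compl (A ℓ)] at hcash
  have h1 : ∑ i ∈ A ℓ, p ℓ i * Eminus p ℓ (fun y => D (g ℓ i + background c g ℓ y))
      = lam * ∑ i ∈ A ℓ, π ℓ i := by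
    rw [Finset.mul_sum]; exact Finset.sum_congr rfl hactive
  have h2 : ∑ i ∈ (A ℓ)ᶜ, p ℓ i * Eminus p ℓ (fun y => D (g ℓ i + background c g ℓ y))
      = (∑ i ∈ (A ℓ)ᶜ, p ℓ i) * Eminus p ℓ (fun y => D (background c g ℓ y)) := by
    rw [Finset.sum_mul]
    refine Finset.sum_congr rfl fun i hi => ?_
    rw [(hsupp ℓ i).2 (Finset.mem_compl.mp hi)]
    simp
  have h3 : ∑ i ∈ (A ℓ)ᶜ, p ℓ i = 1 - ∑ i ∈ A ℓ, p ℓ i := by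
    have := Finset.sum_add_sum_compl (A ℓ) (p ℓ)
    rw [hpsum ℓ] at this; linarith
  rw [h1, h2, h3] at hcash
  linarith [hcash]
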